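/- Let b(t) = 16t(t+1)(t+2)(2t^2+4t+1)/(16t^4+64t^3+76t^2+24t-1), d(t) = (256t^8+2048t^7+6272t^6+8960t^5+5424t^4+192t^3-888t^2-112t+33)/[16(16t^4+64t^3+76t^2+24t-1)(2t^2+4t+1)(t+1)], e(t) = (4096t^12+49152t^11+262144t^10+819200t^9+1665024t^8+2310144t^7+2233728t^6+1507584t^5+697856t^4+211968t^3+38624t^2+3520t+105)/[16(16t^4+64t^3+76t^2+24t-1)(2t^2+4t+1)(t+1)]. Then for every rational t at which all denominators are nonzero, d(t)·e(t)+1 is a square of a rational number. -/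

import Mathlib

theorem stmt_10 (t : ℚ)
    (ht : (16 * t ^ 4 + 64 * t ^ 3 + 76 * t ^ 2 + 24 * t - 1) *
      (2 * t ^ 2 + 4 * t + 1) * (t + 1) ≠ 0)
    (d e : ℚ)
    (hd : d = (256 * t ^ 8 + 2048 * t ^ 7 + 6272 * t ^ 6 + 8960 * t ^ 5 + 5424 * t ^ 4 +
        192 * t ^ 3 - 888 * t ^ 2 - 112 * t + 33) /
      (16 * (16 * t ^ 4 + 64 * t ^ 3 + 76 * t ^ 2 + 24 * t - 1) *
        (2 * t ^ 2 + 4 * t + 1) * (t + 1)))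
    (he : e = (4096 * t ^ 12 + 49152 * t ^ 11 + 262144 * t ^ 10 + 819200 * t ^ 9 +
        1665024 * t ^ 8 + 2310144 * t ^ 7 + 2233728 * t ^ 6 + 1507584 * t ^ 5 +
        697856 * t ^ 4 + 211968 * t ^ 3 + 38624 * t ^ 2 + 3520 * t + 105) /
      (16 * (16 * t ^ 4 + 64 * t ^ 3 + 76 * t ^ 2 + 24 * t - 1) *
        (2 * t ^ 2 + 4 * t + 1) * (t + 1))) :
    ∃ w : ℚ, d * e + 1 = w ^ 2 := by
  have h1 : (16 * t ^ 4 + 64 * t ^ 3 + 76 * t ^ 2 + 24 * t - 1) ≠ 0 := by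
    intro h; apply ht; rw [h]; ring
  have h2 : (2 * t ^ 2 + 4 * t + 1) ≠ 0 := by
    intro h; apply ht; rw [h]; ring
  have h3 : (t + 1) ≠ 0 := by
    intro h; apply ht; rw [h]; ring
  refine ⟨(1024 * t ^ 10 + 10240 * t ^ 9 + 43264 * t ^ 8 + 100352 * t ^ 7 +
      138560 * t ^ 6 + 114560 * t ^ 5 + 52720 * t ^ 4 + 9664 * t ^ 3 -
      1476 * t ^ 2 - 776 * t - 61) /
    (16 * (16 * t ^ 4 + 64 * t ^ 3 + 76 * t ^ 2 + 24 * t - 1) *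
      (2 * t ^ 2 + 4 * t + 1) * (t + 1)), ?_⟩
  subst hd he
  have hD : (16 * (16 * t ^ 4 + 64 * t ^ 3 + 76 * t ^ 2 + 24 * t - 1) *
      (2 * t ^ 2 + 4 * t + 1) * (t + 1)) ≠ 0 :=
    mul_ne_zero (mul_ne_zero (mul_ne_zero (by norm_num) h1) h2) h3
  rw [div_mul_div_comm, div_pow, div_add_one (mul_ne_zero hD hD),
    div_eq_div_iff (mul_ne_zero hD hD) (pow_ne_zero 2 hD)]
  ring
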